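/- Let 0 < R < π and define E : (0, R) → ℝ by E(a) = −(π / (4 sin²(R/2))) · ( 1 − cos(2a) − 4(1 − cos a)cos R + 16(cos a − cos R) log cos(a/2) − 16(1 + cos R)(log cos(a/2))² ). Then for every a ∈ (0, R), E is differentiable at a with E′(a) = π · ((cos a − cos R)/sin²(R/2)) · (1 − cos a + 4 log cos(a/2)) · tan(a/2), and E′(a) < 0. -/

import Mathlib

open Real

/-- The explicit spherical two-ball auxiliary energy `E(a)` on the unit 2-sphere
has derivative `E′(a) = π((cos a − cos R)/sin²(R/2))(1 − cos a + 4 log cos(a/2)) tan(a/2)`,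
which is negative, for every `a ∈ (0,R)` with `0 < R < π`. -/
theorem stmt_6 (R : ℝ) (hR0 : 0 < R) (hRπ : R < π)
    (E : ℝ → ℝ)
    (hE : ∀ a, E a = -(π / (4 * (Real.sin (R/2))^2)) *
        (1 - Real.cos (2*a) - 4*(1 - Real.cos a)*Real.cos R
          + 16*(Real.cos a - Real.cos R)*Real.log (Real.cos (a/2))
          - 16*(1 + Real.cos R)*(Real.log (Real.cos (a/2)))^2)) :
    ∀ a ∈ Set.Ioo (0:ℝ) R,
      HasDerivAt E (π * ((Real.cos a - Real.cos R)/(Real.sin (R/2))^2) *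
          (1 - Real.cos a + 4*Real.log (Real.cos (a/2))) * Real.tan (a/2)) a ∧
      π * ((Real.cos a - Real.cos R)/(Real.sin (R/2))^2) *
          (1 - Real.cos a + 4*Real.log (Real.cos (a/2))) * Real.tan (a/2) < 0 := by
  intro a ha
  obtain ⟨ha0, haR⟩ := ha
  have haπ : a < π := lt_trans haR hRπ
  have hhalf0 : 0 < a / 2 := by linarith
  have hhalfπ : a / 2 < π / 2 := by linarith
  have hc : 0 < Real.cos (a/2) := Real.cos_pos_of_mem_Ioo ⟨by linarith, hhalfπ⟩
  have hc_ne : Real.cos (a/2) ≠ 0 := ne_of_gt hc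
  have hc1 : Real.cos (a/2) < 1 := by
    have := Real.cos_lt_cos_of_nonneg_of_le_pi le_rfl (by linarith : a/2 ≤ π) hhalf0
    simpa using this
  have hs : 0 < Real.sin (R/2) := Real.sin_pos_of_pos_of_lt_pi (by linarith) (by linarith)
  have hs_ne : Real.sin (R/2) ≠ 0 := ne_of_gt hs
  have ht : 0 < Real.tan (a/2) := Real.tan_pos_of_pos_of_lt_pi_div_two hhalf0 hhalfπ
  have hAB : Real.cos R < Real.cos a :=
    Real.cos_lt_cos_of_nonneg_of_le_pi (le_of_lt ha0) (le_of_lt hRπ) haR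
  -- trig identities
  have h2 : 2 * (a/2) = a := by ring
  have hsina : Real.sin a = 2 * Real.sin (a/2) * Real.cos (a/2) := by
    have := Real.sin_two_mul (a/2); rw [h2] at this; exact this
  have hcosa : Real.cos a = 2 * Real.cos (a/2)^2 - 1 := by
    have := Real.cos_two_mul (a/2); rw [h2] at this; exact this
  -- sign of the middle factor
  have hlog : Real.log (Real.cos (a/2)) ≤ Real.cos (a/2) - 1 :=
    Real.log_le_sub_one_of_pos hc
  have hmid : 1 - Real.cos a + 4 * Real.log (Real.cos (a/2)) < 0 := by
    have h1 : 1 - Real.cos a + 4 * Real.log (Real.cos (a/2)) ≤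
        1 - Real.cos a + 4 * (Real.cos (a/2) - 1) := by linarith
    have h2' : 1 - Real.cos a + 4 * (Real.cos (a/2) - 1)
        = -2 * (Real.cos (a/2) - 1)^2 := by rw [hcosa]; ring
    nlinarith [sq_nonneg (Real.cos (a/2) - 1)]
  constructor
  · -- derivative
    have hE' : E = fun x => -(π / (4 * (Real.sin (R/2))^2)) *
        (1 - Real.cos (2*x) - 4*(1 - Real.cos x)*Real.cos R
          + 16*(Real.cos x - Real.cos R)*Real.log (Real.cos (x/2))
          - 16*(1 + Real.cos R)*(Real.log (Real.cos (x/2)))^2) := funext hE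
    have hch : HasDerivAt (fun x : ℝ => Real.cos (x/2)) (-Real.sin (a/2) * (1/2)) a := by
      exact (Real.hasDerivAt_cos (a/2)).comp a ((hasDerivAt_id a).div_const 2)
    have hL : HasDerivAt (fun x : ℝ => Real.log (Real.cos (x/2)))
        ((Real.cos (a/2))⁻¹ * (-Real.sin (a/2) * (1/2))) a := by
      have := (Real.hasDerivAt_log hc_ne).comp a hch; exact this
    have hlin : HasDerivAt (fun x : ℝ => 2 * x) 2 a := by
      simpa using (hasDerivAt_id a).const_mul (2:ℝ)
    have h2a : HasDerivAt (fun x : ℝ => Real.cos (2*x)) (-Real.sin (2*a) * 2) a := by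
      simpa [Function.comp_def] using (Real.hasDerivAt_cos (2*a)).comp a hlin
    have hF : HasDerivAt (fun x : ℝ =>
        1 - Real.cos (2*x) - 4*(1 - Real.cos x)*Real.cos R
          + 16*(Real.cos x - Real.cos R)*Real.log (Real.cos (x/2))
          - 16*(1 + Real.cos R)*(Real.log (Real.cos (x/2)))^2)
        ((0 - (-Real.sin (2*a) * 2) - (4 * (0 - (-Real.sin a))) * Real.cos R
          + ((16 * (-Real.sin a)) * Real.log (Real.cos (a/2))
            + (16 * (Real.cos a - Real.cos R)) * ((Real.cos (a/2))⁻¹ * (-Real.sin (a/2) * (1/2))))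
          - 16*(1 + Real.cos R) * (2 * Real.log (Real.cos (a/2)) ^ 1
              * ((Real.cos (a/2))⁻¹ * (-Real.sin (a/2) * (1/2)))))) a := by
      exact ((((hasDerivAt_const a (1:ℝ)).sub h2a).sub
          ((((hasDerivAt_const a (1:ℝ)).sub (Real.hasDerivAt_cos a)).const_mul 4).mul_const
            (Real.cos R))).add
          ((((Real.hasDerivAt_cos a).sub_const (Real.cos R)).const_mul 16).mul hL)).sub
        ((hL.pow 2).const_mul (16*(1 + Real.cos R)))
    rw [hE']
    have := hF.const_mul (-(π / (4 * (Real.sin (R/2))^2)))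
    refine this.congr_deriv ?_
    rw [Real.tan_eq_sin_div_cos]
    rw [show Real.sin (2*a) = 2 * Real.sin a * Real.cos a from Real.sin_two_mul a]
    rw [hsina, hcosa]
    field_simp
    ring
  · -- negativity
    have hpos : 0 < π * ((Real.cos a - Real.cos R)/(Real.sin (R/2))^2) * Real.tan (a/2) := by
      apply mul_pos (mul_pos Real.pi_pos _) ht
      exact div_pos (by linarith) (pow_pos hs 2)
    have : π * ((Real.cos a - Real.cos R)/(Real.sin (R/2))^2) *
          (1 - Real.cos a + 4*Real.log (Real.cos (a/2))) * Real.tan (a/2)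
        = (π * ((Real.cos a - Real.cos R)/(Real.sin (R/2))^2) * Real.tan (a/2)) *
          (1 - Real.cos a + 4*Real.log (Real.cos (a/2))) := by ring
    rw [this]
    exact mul_neg_of_pos_of_neg hpos hmid
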